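/- Let n, m ≥ 1 be integers, A ∈ ℝ^{n×n}, B ∈ ℝ^{n×m}, K ∈ ℝ^{m×n}, and ρ ∈ [0,1]. Suppose there exist a symmetric positive-definite matrix P ∈ ℝ^{n×n} and scalars β ∈ (0,1), φ ∈ [1,∞) such that βP − (A+BK)ᵀP(A+BK) is positive semidefinite, φP − AᵀPA is positive semidefinite, and (1−ρ)·ln β + ρ·ln φ < 0. Define the induced matrix norm ‖N‖_P = sup_{x ≠ 0} √((Nx)ᵀP(Nx)) / √(xᵀPx), set ε = √β, γ₁ = ln ‖A+BK‖_P if A+BK ≠ 0 and γ₁ = ln ε otherwise, and γ₂ = ln ‖A‖_P if A ≠ 0 and γ₂ = ln ε otherwise. Then for all ρ₁, ρ₂ ∈ [0,1] with ρ₁ + ρ₂ = 1, 1−ρ ≤ ρ₁, and ρ₂ ≤ ρ, one has γ₁·ρ₁ + γ₂·ρ₂ < 0. -/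

import Mathlib

open Matrix

noncomputable section

/-- The matrix norm induced by the vector norm `x ↦ √(xᵀPx)`:
`‖N‖_P = sup_{x ≠ 0} √((Nx)ᵀP(Nx)) / √(xᵀPx)`. -/
def matNormP (n : ℕ) (P N : Matrix (Fin n) (Fin n) ℝ) : ℝ :=
  ⨆ x : {x : Fin n → ℝ // x ≠ 0},
    Real.sqrt (N.mulVec (x : Fin n → ℝ) ⬝ᵥ P.mulVec (N.mulVec (x : Fin n → ℝ))) /
      Real.sqrt ((x : Fin n → ℝ) ⬝ᵥ P.mulVec (x : Fin n → ℝ))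

/-- **Proposition in Section IV-A of the paper.**  If there exist a symmetric
positive-definite `P`, `β ∈ (0,1)`, `φ ∈ [1,∞)` with `βP − (A+BK)ᵀP(A+BK) ⪰ 0`,
`φP − AᵀPA ⪰ 0`, and `(1−ρ)·ln β + ρ·ln φ < 0`, then with `ε = √β`,
`γ₁ = ln ‖A+BK‖_P` (or `ln ε` if `A+BK = 0`) and `γ₂ = ln ‖A‖_P` (or `ln ε` if
`A = 0`), one has `γ₁·ρ₁ + γ₂·ρ₂ < 0` for all `ρ₁, ρ₂ ∈ [0,1]` with `ρ₁ + ρ₂ = 1`,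
`1−ρ ≤ ρ₁` and `ρ₂ ≤ ρ`. -/
lemma term_le {n : ℕ} {P N : Matrix (Fin n) (Fin n) ℝ} (hP : P.PosDef)
    {c : ℝ} (hc : 0 ≤ c) (h : (c • P - Nᵀ * P * N).PosSemidef)
    (x : Fin n → ℝ) (hx : x ≠ 0) :
    Real.sqrt (N.mulVec x ⬝ᵥ P.mulVec (N.mulVec x)) /
      Real.sqrt (x ⬝ᵥ P.mulVec x) ≤ Real.sqrt c := by
  have hb : 0 < x ⬝ᵥ P.mulVec x := hP.dotProduct_mulVec_pos hx
  have heq : x ⬝ᵥ (Nᵀ * P * N).mulVec x = N.mulVec x ⬝ᵥ P.mulVec (N.mulVec x) := by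
    rw [← mulVec_mulVec, ← mulVec_mulVec, dotProduct_mulVec, vecMul_transpose]
  have hkey : N.mulVec x ⬝ᵥ P.mulVec (N.mulVec x) ≤ c * (x ⬝ᵥ P.mulVec x) := by
    have h2 := h.dotProduct_mulVec_nonneg x
    simp only [star_trivial] at h2
    rw [sub_mulVec, dotProduct_sub, smul_mulVec, dotProduct_smul, smul_eq_mul,
      heq] at h2
    linarith
  rw [div_le_iff₀ (Real.sqrt_pos.2 hb), ← Real.sqrt_mul hc]
  exact Real.sqrt_le_sqrt hkey

lemma matNormP_le {n : ℕ} (hn : 1 ≤ n) {P N : Matrix (Fin n) (Fin n) ℝ} (hP : P.PosDef)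
    {c : ℝ} (hc : 0 ≤ c) (h : (c • P - Nᵀ * P * N).PosSemidef) :
    matNormP n P N ≤ Real.sqrt c := by
  have : Nonempty {x : Fin n → ℝ // x ≠ 0} := by
    refine ⟨⟨Pi.single ⟨0, hn⟩ 1, ?_⟩⟩
    intro h0
    have := congrFun h0 ⟨0, hn⟩
    simp at this
  exact ciSup_le fun x => term_le hP hc h x x.2

lemma matNormP_pos {n : ℕ} (hn : 1 ≤ n) {P N : Matrix (Fin n) (Fin n) ℝ} (hP : P.PosDef)
    (hN : N ≠ 0) {c : ℝ} (hc : 0 ≤ c) (h : (c • P - Nᵀ * P * N).PosSemidef) :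
    0 < matNormP n P N := by
  obtain ⟨i, j, hij⟩ : ∃ i j, N i j ≠ 0 := by
    by_contra hcon
    push_neg at hcon
    exact hN (by ext i j; simp [hcon])
  set x : Fin n → ℝ := Pi.single j 1 with hxdef
  have hx : x ≠ 0 := by
    intro h0
    have := congrFun h0 j
    simp [hxdef] at this
  have hNx : N.mulVec x ≠ 0 := by
    intro h0
    have := congrFun h0 i
    simp [hxdef, mulVec_single] at this
    exact hij this
  have hterm : 0 < Real.sqrt (N.mulVec x ⬝ᵥ P.mulVec (N.mulVec x)) /
      Real.sqrt (x ⬝ᵥ P.mulVec x) :=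
    div_pos (Real.sqrt_pos.2 (hP.dotProduct_mulVec_pos hNx)) (Real.sqrt_pos.2 (hP.dotProduct_mulVec_pos hx))
  refine lt_of_lt_of_le hterm ?_
  refine le_ciSup_of_le ⟨Real.sqrt c, ?_⟩ ⟨x, hx⟩ le_rfl
  rintro y ⟨z, rfl⟩
  exact term_le hP hc h z z.2

theorem stmt_8 (n m : ℕ) (hn : 1 ≤ n) (hm : 1 ≤ m)
    (A : Matrix (Fin n) (Fin n) ℝ) (B : Matrix (Fin n) (Fin m) ℝ)
    (K : Matrix (Fin m) (Fin n) ℝ)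
    (ρ : ℝ) (hρ : ρ ∈ Set.Icc (0 : ℝ) 1)
    (P : Matrix (Fin n) (Fin n) ℝ) (hP : P.PosDef)
    (β φ : ℝ) (hβ : β ∈ Set.Ioo (0 : ℝ) 1) (hφ : φ ∈ Set.Ici (1 : ℝ))
    (h₁ : (β • P - (A + B * K)ᵀ * P * (A + B * K)).PosSemidef)
    (h₂ : (φ • P - Aᵀ * P * A).PosSemidef)
    (h₃ : (1 - ρ) * Real.log β + ρ * Real.log φ < 0) :
    ∀ ρ₁ ρ₂ : ℝ, ρ₁ ∈ Set.Icc (0 : ℝ) 1 → ρ₂ ∈ Set.Icc (0 : ℝ) 1 →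
      ρ₁ + ρ₂ = 1 → 1 - ρ ≤ ρ₁ → ρ₂ ≤ ρ →
      (if A + B * K = 0 then Real.log (Real.sqrt β)
        else Real.log (matNormP n P (A + B * K))) * ρ₁ +
      (if A = 0 then Real.log (Real.sqrt β)
        else Real.log (matNormP n P A)) * ρ₂ < 0 := by
  intro ρ₁ ρ₂ hρ₁ hρ₂ hsum hlow hhigh
  have hβ0 := hβ.1
  have hlogβ : Real.log β < 0 := Real.log_neg hβ.1 hβ.2
  have hlogφ : 0 ≤ Real.log φ := Real.log_nonneg hφ
  have hsβ : Real.log (Real.sqrt β) = Real.log β / 2 := Real.log_sqrt hβ0.le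
  have hsφ : Real.log (Real.sqrt φ) = Real.log φ / 2 :=
    Real.log_sqrt (le_trans zero_le_one hφ)
  have hg1 : (if A + B * K = 0 then Real.log (Real.sqrt β)
      else Real.log (matNormP n P (A + B * K))) ≤ Real.log β / 2 := by
    split
    · rw [hsβ]
    · next hne =>
      calc Real.log (matNormP n P (A + B * K))
          ≤ Real.log (Real.sqrt β) :=
            Real.log_le_log (matNormP_pos hn hP hne hβ0.le h₁)
              (matNormP_le hn hP hβ0.le h₁)
        _ = Real.log β / 2 := hsβ
  have hg2 : (if A = 0 then Real.log (Real.sqrt β)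
      else Real.log (matNormP n P A)) ≤ Real.log φ / 2 := by
    split
    · rw [hsβ]; linarith
    · next hne =>
      calc Real.log (matNormP n P A)
          ≤ Real.log (Real.sqrt φ) :=
            Real.log_le_log (matNormP_pos hn hP hne (by linarith [hφ.out] : (0:ℝ) ≤ φ) h₂)
              (matNormP_le hn hP (by linarith [hφ.out] : (0:ℝ) ≤ φ) h₂)
        _ = Real.log φ / 2 := hsφ
  have h1 := hρ₁.1
  have h2 := hρ₂.1
  nlinarith [mul_le_mul_of_nonneg_right hg1 h1, mul_le_mul_of_nonneg_right hg2 h2,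
    mul_le_mul_of_nonpos_left hlow hlogβ.le, mul_le_mul_of_nonneg_left hhigh hlogφ]

end
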